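/- arXiv:2401.11712 — 5 statements merged into one kernel-verified Lean document; each statement's English description precedes it below -/
import Mathlib

section
/- For every positive integer s, the (1+1)-ENAS algorithm with one-bit mutation and initial bound s finds an optimal architecture of the UNIFORM problem (i.e., reaches a state of fitness 1) in expected runtime E[T] ≤ 63n/4. -/
/-!
Runtime analysis of the (1+1)-ENAS algorithm on the UNIFORM problem.

A neural architecture is a triple `x = (n_A, n_B, n_C) ∈ ℕ³`.  With `a = n/2`,
`b = c = n/4`, `A = (1/2)·sin(2π/n)`, `B = π/n − A`, the fitness is
`f(x) = (1/π)·((n/2 + i(x))·A + (n/4 + j(x))·B)` where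
`i(x) = min(n_B, b) + min(n_C, c)` and
`j(x) = min(n_A, a) + min(n_B, b) − max(0, min(n_B − b, c − n_C))` (in ℤ).

One-bit mutation chooses uniformly among nine actions (three increments with
probability 1/9 each, three guarded decrements with probability 1/9 each and
six guarded modifications with probability 1/18 each); we realize this as the
push-forward of the uniform distribution on `Fin 18`.

The (1+1)-ENAS Markov chain starts from a state whose coordinates are
independent uniform on `{0,…,s}` and repeatedly applies mutation followed by
elitist selection.  The expected runtime `E[T]`, where `T` is the first `t`
with `f(x_t) = 1`, is expressed as `∑_{t≥0} P(T > t)`, where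
`P(T > t) = ∑_x alive t x` and `alive t x` is the probability that the chain
is in state `x` at time `t` without having reached fitness `1` at any time
`u ≤ t`.
-/

namespace ENAS

open scoped ENNReal

/-- A neural architecture: the numbers of A-, B- and C-type blocks. -/
abbrev State := ℕ × ℕ × ℕ

/-- The number of B/C-type blocks contributing to the fitness. -/
def iVal (n : ℕ) (x : State) : ℕ := min x.2.1 (n / 4) + min x.2.2 (n / 4)

/-- The number of A/B-type blocks contributing to the fitness minus the number of
B-type blocks negatively affecting the fitness (evaluated in `ℤ`). -/
def jVal (n : ℕ) (x : State) : ℤ :=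
  min (x.1 : ℤ) ((n : ℤ) / 2) + min (x.2.1 : ℤ) ((n : ℤ) / 4) -
    max 0 (min ((x.2.1 : ℤ) - (n : ℤ) / 4) ((n : ℤ) / 4 - (x.2.2 : ℤ)))

/-- The fitness (classification accuracy) of an architecture on `UNIFORM`. -/
noncomputable def fitness (n : ℕ) (x : State) : ℝ :=
  (1 / Real.pi) *
    (((n : ℝ) / 2 + (iVal n x : ℝ)) * ((1 / 2) * Real.sin (2 * Real.pi / n)) +
      ((n : ℝ) / 4 + (jVal n x : ℝ)) *
        (Real.pi / n - (1 / 2) * Real.sin (2 * Real.pi / n)))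

/-- The elementary mutation actions.  Seeds `0`–`11` (two seeds per action) give the
six probability-`1/9` actions (add A/B/C, remove A/B/C, where removal of an absent
block leaves the state unchanged, as does truncated subtraction on `ℕ`); seeds
`12`–`17` give the six probability-`1/18` modification actions. -/
def applyAction (k : Fin 18) (x : State) : State :=
  match (k : ℕ), x with
  | 0, (na, nb, nc) => (na + 1, nb, nc)
  | 1, (na, nb, nc) => (na + 1, nb, nc)
  | 2, (na, nb, nc) => (na, nb + 1, nc)
  | 3, (na, nb, nc) => (na, nb + 1, nc)
  | 4, (na, nb, nc) => (na, nb, nc + 1)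
  | 5, (na, nb, nc) => (na, nb, nc + 1)
  | 6, (na, nb, nc) => (na - 1, nb, nc)
  | 7, (na, nb, nc) => (na - 1, nb, nc)
  | 8, (na, nb, nc) => (na, nb - 1, nc)
  | 9, (na, nb, nc) => (na, nb - 1, nc)
  | 10, (na, nb, nc) => (na, nb, nc - 1)
  | 11, (na, nb, nc) => (na, nb, nc - 1)
  | 12, (na, nb, nc) => if 0 < na then (na - 1, nb + 1, nc) else (na, nb, nc)
  | 13, (na, nb, nc) => if 0 < na then (na - 1, nb, nc + 1) else (na, nb, nc)
  | 14, (na, nb, nc) => if 0 < nb then (na + 1, nb - 1, nc) else (na, nb, nc)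
  | 15, (na, nb, nc) => if 0 < nb then (na, nb - 1, nc + 1) else (na, nb, nc)
  | 16, (na, nb, nc) => if 0 < nc then (na + 1, nb, nc - 1) else (na, nb, nc)
  | _, (na, nb, nc) => if 0 < nc then (na, nb + 1, nc - 1) else (na, nb, nc)

/-- The one-bit mutation operator, as a probability distribution on offspring. -/
noncomputable def mutate (x : State) : PMF State :=
  (PMF.uniformOfFintype (Fin 18)).map (fun k => applyAction k x)

/-- Elitist selection: keep the offspring `y` iff `f(y) ≥ f(x)`. -/
noncomputable def select (n : ℕ) (x y : State) : State :=
  if fitness n x ≤ fitness n y then y else x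

/-- One generation of the (1+1)-ENAS algorithm with one-bit mutation. -/
noncomputable def stepOneBit (n : ℕ) (x : State) : PMF State :=
  (mutate x).map (select n x)

/-- The initial distribution: the three coordinates are independent, each uniform on
`{0, 1, …, s}`. -/
noncomputable def initDist (s : ℕ) : PMF State :=
  (PMF.uniformOfFintype (Fin (s + 1) × Fin (s + 1) × Fin (s + 1))).map
    (fun q => ((q.1 : ℕ), (q.2.1 : ℕ), (q.2.2 : ℕ)))

/-- `alive n step μ0 t x` is the probability that the chain with initial distribution
`μ0` and transition kernel `step` is in state `x` at time `t` and has not reached a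
state of fitness `1` at any time `u ≤ t`; so `∑' x, alive n step μ0 t x = P(T > t)`
where `T` is the first hitting time of `{f = 1}`. -/
noncomputable def alive (n : ℕ) (step : State → PMF State) (μ0 : PMF State) :
    ℕ → State → ℝ≥0∞
  | 0, x => if fitness n x = 1 then 0 else μ0 x
  | t + 1, x => if fitness n x = 1 then 0 else ∑' y, alive n step μ0 t y * step y x

/-- The expected runtime `E[T] = ∑_{t ≥ 0} P(T > t)` of the algorithm, where `T` is
the first `t ≥ 0` with `f(x_t) = 1`. -/
noncomputable def expectedRuntime (n : ℕ) (step : State → PMF State) (μ0 : PMF State) :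
    ℝ≥0∞ :=
  ∑' t : ℕ, ∑' x : State, alive n step μ0 t x


/-! ### Auxiliary machinery for the runtime analysis -/

/-- The total deficiency of a state: how far it is below the optimal thresholds. -/
def defic (n : ℕ) (x : State) : ℕ := (n/2 - x.1) + (n/4 - x.2.1) + (n/4 - x.2.2)

lemma hA_pos {n : ℕ} (hn : 8 ≤ n) : 0 < (1/2) * Real.sin (2 * Real.pi / n) := by
  have hπ := Real.pi_pos
  have hn' : (8:ℝ) ≤ n := by exact_mod_cast hn
  have h1 : 0 < 2 * Real.pi / n := by positivity
  have h2 : 2 * Real.pi / n < Real.pi := by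
    rw [div_lt_iff₀ (by linarith)]
    nlinarith
  have := Real.sin_pos_of_pos_of_lt_pi h1 h2
  linarith

lemma hB_pos {n : ℕ} (hn : 8 ≤ n) :
    0 < Real.pi / n - (1/2) * Real.sin (2 * Real.pi / n) := by
  have hπ := Real.pi_pos
  have hn' : (8:ℝ) ≤ n := by exact_mod_cast hn
  have h1 : 0 < 2 * Real.pi / n := by positivity
  have h2 := Real.sin_lt h1
  have h3 : (1/2) * (2 * Real.pi / n) = Real.pi / n := by ring
  nlinarith

lemma fitness_mono {n : ℕ} (hn : 8 ≤ n) {x y : State}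
    (hi : iVal n x ≤ iVal n y) (hj : jVal n x ≤ jVal n y) :
    fitness n x ≤ fitness n y := by
  have hA := hA_pos hn
  have hB := hB_pos hn
  have hi' : (iVal n x : ℝ) ≤ iVal n y := by exact_mod_cast hi
  have hj' : ((jVal n x : ℤ) : ℝ) ≤ ((jVal n y : ℤ) : ℝ) := by exact_mod_cast hj
  unfold fitness
  have hπ := Real.pi_pos
  apply mul_le_mul_of_nonneg_left _ (by positivity)
  exact add_le_add (mul_le_mul_of_nonneg_right (by linarith) hA.le)
    (mul_le_mul_of_nonneg_right (by linarith) hB.le)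

lemma fitness_strict {n : ℕ} (hn : 8 ≤ n) {x y : State}
    (hi : iVal n y ≤ iVal n x) (hj : jVal n y ≤ jVal n x)
    (hlt : iVal n y < iVal n x ∨ jVal n y < jVal n x) :
    fitness n y < fitness n x := by
  have hA := hA_pos hn
  have hB := hB_pos hn
  have hi' : (iVal n y : ℝ) ≤ iVal n x := by exact_mod_cast hi
  have hj' : ((jVal n y : ℤ) : ℝ) ≤ ((jVal n x : ℤ) : ℝ) := by exact_mod_cast hj
  have hπ := Real.pi_pos
  unfold fitness
  apply mul_lt_mul_of_pos_left _ (by positivity)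
  rcases hlt with h | h
  · have h' : (iVal n y : ℝ) + 1 ≤ iVal n x := by exact_mod_cast h
    nlinarith
  · have h' : ((jVal n y : ℤ) : ℝ) + 1 ≤ ((jVal n x : ℤ) : ℝ) := by exact_mod_cast h
    nlinarith

lemma fitness_eq_one_iff {m : ℕ} (hm : 2 ≤ m) (x : State) :
    fitness (4*m) x = 1 ↔ defic (4*m) x = 0 := by
  have hn : 8 ≤ 4*m := by omega
  have hm0 : ((4*m : ℕ) : ℝ) ≠ 0 := by positivity
  have hπ := Real.pi_ne_zero
  have key : ∀ y : State, iVal (4*m) y = 2*m → jVal (4*m) y = 3*m →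
      fitness (4*m) y = 1 := by
    intro y hi hj
    unfold fitness
    rw [hi, hj]
    push_cast
    field_simp
    ring
  constructor
  · intro h1
    by_contra hd
    have hij : iVal (4*m) x ≤ iVal (4*m) (2*m, m, m) ∧
        jVal (4*m) x ≤ jVal (4*m) (2*m, m, m) ∧
        (iVal (4*m) x < iVal (4*m) (2*m, m, m) ∨
         jVal (4*m) x < jVal (4*m) (2*m, m, m)) := by
      simp only [iVal, jVal, defic] at *
      omega
    have htop : fitness (4*m) (2*m, m, m) = 1 := by
      apply key <;> simp only [iVal, jVal] <;> omega
    have := fitness_strict hn hij.1 hij.2.1 hij.2.2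
    rw [h1, htop] at this
    exact lt_irrefl _ this
  · intro hd
    apply key <;> simp only [iVal, jVal, defic] at * <;> omega

set_option maxHeartbeats 2000000 in
lemma key_disj (m : ℕ) (k : Fin 18) (x : State) :
    (iVal (4*m) (applyAction k x) ≤ iVal (4*m) x ∧
     jVal (4*m) (applyAction k x) ≤ jVal (4*m) x ∧
     (iVal (4*m) (applyAction k x) < iVal (4*m) x ∨
      jVal (4*m) (applyAction k x) < jVal (4*m) x)) ∨
    defic (4*m) (applyAction k x) ≤ defic (4*m) x := by
  obtain ⟨na, nb, nc⟩ := x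
  obtain ⟨v, hv⟩ := k
  interval_cases v <;>
    simp only [applyAction] <;> (try split) <;>
    simp only [iVal, jVal, defic] <;> omega

lemma sel_defic (m : ℕ) (hm : 2 ≤ m) (k : Fin 18) (x : State) :
    defic (4*m) (select (4*m) x (applyAction k x)) ≤ defic (4*m) x := by
  rw [select]
  split
  · rename_i hacc
    by_contra hlt
    push_neg at hlt
    rcases key_disj m k x with ⟨hi, hj, hstrict⟩ | hle
    · exact absurd hacc (not_le.mpr (fitness_strict (by omega) hi hj hstrict))
    · omega
  · exact le_rfl

lemma select_eq_of_mono {n : ℕ} (hn : 8 ≤ n) (x y : State)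
    (hi : iVal n x ≤ iVal n y) (hj : jVal n x ≤ jVal n y) :
    select n x y = y := by
  rw [select, if_pos (fitness_mono hn hi hj)]

lemma progress (m : ℕ) (hm : 2 ≤ m) (x : State) (hx : defic (4*m) x ≠ 0) :
    ∃ k₁ k₂ : Fin 18, k₁ ≠ k₂ ∧
      defic (4*m) (select (4*m) x (applyAction k₁ x)) + 1 ≤ defic (4*m) x ∧
      defic (4*m) (select (4*m) x (applyAction k₂ x)) + 1 ≤ defic (4*m) x := by
  have hn : 8 ≤ 4*m := by omega
  obtain ⟨na, nb, nc⟩ := x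
  simp only [defic] at hx
  rcases (by omega : na < 2*m ∨ nb < m ∨ nc < m) with h | h | h
  · have e0 : applyAction (0 : Fin 18) (na, nb, nc) = (na + 1, nb, nc) := rfl
    have e1 : applyAction (1 : Fin 18) (na, nb, nc) = (na + 1, nb, nc) := rfl
    have hsel : select (4*m) (na, nb, nc) (na + 1, nb, nc) = (na + 1, nb, nc) :=
      select_eq_of_mono hn _ _ (by simp only [iVal]; omega) (by simp only [jVal]; omega)
    refine ⟨0, 1, by decide, ?_, ?_⟩
    · rw [e0, hsel]; simp only [defic]; omega
    · rw [e1, hsel]; simp only [defic]; omega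
  · have e0 : applyAction (2 : Fin 18) (na, nb, nc) = (na, nb + 1, nc) := rfl
    have e1 : applyAction (3 : Fin 18) (na, nb, nc) = (na, nb + 1, nc) := rfl
    have hsel : select (4*m) (na, nb, nc) (na, nb + 1, nc) = (na, nb + 1, nc) :=
      select_eq_of_mono hn _ _ (by simp only [iVal]; omega) (by simp only [jVal]; omega)
    refine ⟨2, 3, by decide, ?_, ?_⟩
    · rw [e0, hsel]; simp only [defic]; omega
    · rw [e1, hsel]; simp only [defic]; omega
  · have e0 : applyAction (4 : Fin 18) (na, nb, nc) = (na, nb, nc + 1) := rfl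
    have e1 : applyAction (5 : Fin 18) (na, nb, nc) = (na, nb, nc + 1) := rfl
    have hsel : select (4*m) (na, nb, nc) (na, nb, nc + 1) = (na, nb, nc + 1) :=
      select_eq_of_mono hn _ _ (by simp only [iVal]; omega) (by simp only [jVal]; omega)
    refine ⟨4, 5, by decide, ?_, ?_⟩
    · rw [e0, hsel]; simp only [defic]; omega
    · rw [e1, hsel]; simp only [defic]; omega

lemma tsum_map_mul {α : Type*} [Fintype α] (q : PMF α) (g : α → State) (h : State → ℝ≥0∞) :
    ∑' y, (q.map g) y * h y = ∑ k, q k * h (g k) := by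
  classical
  calc ∑' y, (q.map g) y * h y
      = ∑' y, ∑' k, (if y = g k then q k * h y else 0) := by
        congr 1; funext y
        rw [PMF.map_apply, ← ENNReal.tsum_mul_right]
        congr 1; funext k
        split <;> simp
    _ = ∑' k, ∑' y, (if y = g k then q k * h y else 0) := ENNReal.tsum_comm
    _ = ∑' k : α, q k * h (g k) := by
        congr 1; funext k
        rw [tsum_eq_single (g k) (fun y hy => if_neg hy)]
        simp
    _ = ∑ k, q k * h (g k) := tsum_fintype _

lemma sum_bound (g : Fin 18 → ℕ) (d : ℕ) (hle : ∀ k, g k ≤ d)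
    (k₁ k₂ : Fin 18) (hne : k₁ ≠ k₂) (h1 : g k₁ + 1 ≤ d) (h2 : g k₂ + 1 ≤ d) :
    ∑ k, g k + 2 ≤ 18 * d := by
  classical
  have step : ∑ k : Fin 18, (g k + (if k = k₁ then 1 else 0) + (if k = k₂ then 1 else 0))
      ≤ ∑ _k : Fin 18, d := by
    apply Finset.sum_le_sum
    intro k _
    have hk := hle k
    by_cases e1 : k = k₁
    · subst e1; rw [if_pos rfl, if_neg hne]; omega
    · rw [if_neg e1]
      by_cases e2 : k = k₂
      · subst e2; rw [if_pos rfl]; omega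
      · rw [if_neg e2]; omega
  simp only [Finset.sum_add_distrib, Finset.sum_ite_eq', Finset.mem_univ, if_pos,
    Finset.sum_const, Finset.card_univ, Fintype.card_fin, smul_eq_mul] at step
  omega

lemma step_eq (n : ℕ) (x : State) :
    stepOneBit n x =
      (PMF.uniformOfFintype (Fin 18)).map (fun k => select n x (applyAction k x)) := by
  rw [stepOneBit, mutate, PMF.map_comp]
  rfl

lemma drift (m : ℕ) (hm : 2 ≤ m) (y : State) (hy : defic (4*m) y ≠ 0) :
    (∑' x : State, (stepOneBit (4*m) y) x * ((9 * defic (4*m) x : ℕ) : ℝ≥0∞)) + 1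
      ≤ ((9 * defic (4*m) y : ℕ) : ℝ≥0∞) := by
  obtain ⟨k₁, k₂, hne, hp1, hp2⟩ := progress m hm y hy
  have hnat : ∑ k : Fin 18, defic (4*m) (select (4*m) y (applyAction k y)) + 2
      ≤ 18 * defic (4*m) y :=
    sum_bound _ _ (fun k => sel_defic m hm k y) k₁ k₂ hne hp1 hp2
  have hcast : (∑ k : Fin 18, ((9 * defic (4*m) (select (4*m) y (applyAction k y)) : ℕ) : ℝ≥0∞))
      + 18 ≤ 18 * ((9 * defic (4*m) y : ℕ) : ℝ≥0∞) := by
    have hnat2 : (∑ k : Fin 18, 9 * defic (4*m) (select (4*m) y (applyAction k y)))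
        + 18 ≤ 18 * (9 * defic (4*m) y) := by
      rw [← Finset.mul_sum]
      omega
    calc (∑ k : Fin 18, ((9 * defic (4*m) (select (4*m) y (applyAction k y)) : ℕ) : ℝ≥0∞)) + 18
        = (((∑ k : Fin 18, 9 * defic (4*m) (select (4*m) y (applyAction k y))) + 18 : ℕ) : ℝ≥0∞) := by
          push_cast
          ring
      _ ≤ ((18 * (9 * defic (4*m) y) : ℕ) : ℝ≥0∞) := Nat.cast_le.mpr hnat2
      _ = 18 * ((9 * defic (4*m) y : ℕ) : ℝ≥0∞) := by push_cast; ring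
  rw [step_eq, tsum_map_mul]
  simp only [PMF.uniformOfFintype_apply, Fintype.card_fin, Nat.cast_ofNat]
  rw [← Finset.mul_sum]
  have h18 : ((18 : ℝ≥0∞))⁻¹ * 18 = 1 := ENNReal.inv_mul_cancel (by norm_num) (by norm_num)
  calc (18 : ℝ≥0∞)⁻¹ * (∑ k : Fin 18, ((9 * defic (4*m) (select (4*m) y (applyAction k y)) : ℕ) : ℝ≥0∞)) + 1
      = (18 : ℝ≥0∞)⁻¹ * ((∑ k : Fin 18, ((9 * defic (4*m) (select (4*m) y (applyAction k y)) : ℕ) : ℝ≥0∞)) + 18) := by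
        rw [mul_add, h18]
    _ ≤ (18 : ℝ≥0∞)⁻¹ * (18 * ((9 * defic (4*m) y : ℕ) : ℝ≥0∞)) := mul_le_mul_right hcast _
    _ = ((9 * defic (4*m) y : ℕ) : ℝ≥0∞) := by rw [← mul_assoc, h18, one_mul]

/-- for every positive integer `s`, the (1+1)-ENAS algorithm with
one-bit mutation and initial bound `s` finds an optimum of the UNIFORM problem in
expected runtime at most `63n/4`. -/
theorem onebit_upper_bound (n : ℕ) (hn : 8 ≤ n) (hn4 : 4 ∣ n) (s : ℕ) (hs : 0 < s) :
    expectedRuntime n (stepOneBit n) (initDist s) ≤ 63 * (n : ℝ≥0∞) / 4 := by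
  obtain ⟨m, rfl⟩ : ∃ m, n = 4 * m := ⟨n / 4, (Nat.mul_div_cancel' hn4).symm⟩
  have hm : 2 ≤ m := by omega
  set step := stepOneBit (4*m) with hstep
  set μ0 := initDist s with hμ0
  set h : State → ℝ≥0∞ := fun x => ((9 * defic (4*m) x : ℕ) : ℝ≥0∞) with hh
  set al := alive (4*m) step μ0 with hal
  set P : ℕ → ℝ≥0∞ := fun t => ∑' x, al t x with hP
  set Φ : ℕ → ℝ≥0∞ := fun t => ∑' x, al t x * h x with hΦ
  have halive_opt : ∀ t x, al t x ≠ 0 → defic (4*m) x ≠ 0 := by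
    intro t x hne hd
    apply hne
    have hfx : fitness (4*m) x = 1 := (fitness_eq_one_iff hm x).mpr hd
    cases t <;> simp [hal, alive, hfx]
  have key : ∀ t, Φ (t+1) + P t ≤ Φ t := by
    intro t
    have hE : ∀ y : State, al t y ≠ 0 → (∑' x, step y x * h x) + 1 ≤ h y := by
      intro y hy
      exact drift m hm y (halive_opt t y hy)
    have h1 : Φ (t+1) ≤ ∑' y, al t y * ∑' x, step y x * h x := by
      calc Φ (t+1) = ∑' x, al (t+1) x * h x := rfl
        _ ≤ ∑' x, (∑' y, al t y * step y x) * h x := by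
            apply ENNReal.tsum_le_tsum
            intro x
            apply mul_le_mul_left
            show al (t+1) x ≤ _
            rw [hal]
            show alive (4*m) step μ0 (t+1) x ≤ _
            rw [alive]
            split
            · exact zero_le
            · exact le_rfl
        _ = ∑' x, ∑' y, al t y * step y x * h x := by
            congr 1; funext x; exact (ENNReal.tsum_mul_right).symm
        _ = ∑' y, ∑' x, al t y * step y x * h x := ENNReal.tsum_comm
        _ = ∑' y, al t y * ∑' x, step y x * h x := by
            congr 1; funext y
            rw [← ENNReal.tsum_mul_left]
            congr 1; funext x; ring
    calc Φ (t+1) + P t ≤ (∑' y, al t y * ∑' x, step y x * h x) + ∑' y, al t y :=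
          add_le_add_left h1 _
      _ = ∑' y, (al t y * (∑' x, step y x * h x) + al t y) := (ENNReal.tsum_add).symm
      _ ≤ ∑' y, al t y * h y := by
          apply ENNReal.tsum_le_tsum
          intro y
          by_cases hy : al t y = 0
          · simp [hy]
          · calc al t y * (∑' x, step y x * h x) + al t y
                = al t y * ((∑' x, step y x * h x) + 1) := by ring
              _ ≤ al t y * h y := mul_le_mul_right (hE y hy) _
      _ = Φ t := rfl
  have ind : ∀ N, (∑ t ∈ Finset.range N, P t) + Φ N ≤ Φ 0 := by
    intro N
    induction N with
    | zero => simp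
    | succ N ih =>
      rw [Finset.sum_range_succ]
      calc ∑ t ∈ Finset.range N, P t + P N + Φ (N+1)
          = ∑ t ∈ Finset.range N, P t + (Φ (N+1) + P N) := by ring
        _ ≤ ∑ t ∈ Finset.range N, P t + Φ N := add_le_add_right (key N) _
        _ ≤ Φ 0 := ih
  have hΦ0 : Φ 0 ≤ ((9 * (4*m) : ℕ) : ℝ≥0∞) := by
    have hterm : ∀ x : State, al 0 x * h x ≤ μ0 x * ((9 * (4*m) : ℕ) : ℝ≥0∞) := by
      intro x
      apply mul_le_mul'
      · rw [hal]
        show alive (4*m) step μ0 0 x ≤ μ0 x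
        rw [alive]
        split
        · exact zero_le
        · exact le_rfl
      · rw [hh]
        exact Nat.cast_le.mpr (by simp only [defic]; omega)
    calc Φ 0 ≤ ∑' x, μ0 x * ((9 * (4*m) : ℕ) : ℝ≥0∞) := ENNReal.tsum_le_tsum hterm
      _ = (∑' x, μ0 x) * ((9 * (4*m) : ℕ) : ℝ≥0∞) := ENNReal.tsum_mul_right
      _ = ((9 * (4*m) : ℕ) : ℝ≥0∞) := by rw [μ0.tsum_coe, one_mul]
  have hER : expectedRuntime (4*m) step μ0 ≤ Φ 0 := by
    show (∑' t, P t) ≤ Φ 0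
    rw [ENNReal.tsum_eq_iSup_sum]
    apply iSup_le
    intro sfin
    calc ∑ t ∈ sfin, P t ≤ ∑ t ∈ Finset.range (sfin.sup id + 1), P t := by
          apply Finset.sum_le_sum_of_subset
          intro t ht
          exact Finset.mem_range.mpr (Nat.lt_succ_of_le (Finset.le_sup (f := id) ht))
      _ ≤ _ + Φ (sfin.sup id + 1) := le_add_right le_rfl
      _ ≤ Φ 0 := ind _
  have hfin : ((9 * (4*m) : ℕ) : ℝ≥0∞) ≤ 63 * ((4*m : ℕ) : ℝ≥0∞) / 4 := by
    rw [ENNReal.le_div_iff_mul_le (Or.inl (by norm_num)) (Or.inl (by norm_num))]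
    have : ((9 * (4*m) : ℕ) : ℝ≥0∞) * 4 = ((9 * (4*m) * 4 : ℕ) : ℝ≥0∞) := by push_cast; ring
    rw [this]
    have h63 : (63 : ℝ≥0∞) * ((4*m : ℕ) : ℝ≥0∞) = ((63 * (4*m) : ℕ) : ℝ≥0∞) := by
      push_cast; ring
    rw [h63]
    exact Nat.cast_le.mpr (by omega)
  exact le_trans hER (le_trans hΦ0 hfin)


end ENAS
end

section
/- There exist constants C > 0 and n₀ such that for every integer n ≥ n₀ divisible by 4, the (1+1)-ENAS algorithm with one-bit mutation and initial bound s = n/4 has expected runtime E[T] ≥ C·log n on the UNIFORM problem. -/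
/-!
Runtime analysis of the (1+1)-ENAS algorithm on the UNIFORM problem.

A neural architecture is a triple `x = (n_A, n_B, n_C) ∈ ℕ³`.  With `a = n/2`,
`b = c = n/4`, `A = (1/2)·sin(2π/n)`, `B = π/n − A`, the fitness is
`f(x) = (1/π)·((n/2 + i(x))·A + (n/4 + j(x))·B)` where
`i(x) = min(n_B, b) + min(n_C, c)` and
`j(x) = min(n_A, a) + min(n_B, b) − max(0, min(n_B − b, c − n_C))` (in ℤ).

One-bit mutation chooses uniformly among nine actions (three increments with
probability 1/9 each, three guarded decrements with probability 1/9 each and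
six guarded modifications with probability 1/18 each); we realize this as the
push-forward of the uniform distribution on `Fin 18`.

The (1+1)-ENAS Markov chain starts from a state whose coordinates are
independent uniform on `{0,…,s}` and repeatedly applies mutation followed by
elitist selection.  The expected runtime `E[T]`, where `T` is the first `t`
with `f(x_t) = 1`, is expressed as `∑_{t≥0} P(T > t)`, where
`P(T > t) = ∑_x alive t x` and `alive t x` is the probability that the chain
is in state `x` at time `t` without having reached fitness `1` at any time
`u ≤ t`.
-/

namespace ENAS

open scoped ENNReal

lemma fitness_lt_one {m : ℕ} (hm : 2 ≤ m) {x : State}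
    (hx : x.1 < 2 * m) : fitness (4 * m) x < 1 := by
  have hπ : (0:ℝ) < Real.pi := Real.pi_pos
  have hmR : (0:ℝ) < (m:ℝ) := by
    have : 0 < m := by omega
    exact_mod_cast this
  set θ : ℝ := 2 * Real.pi / (4 * m) with hθdef
  have hθeq : 2 * Real.pi / ((4 * m : ℕ) : ℝ) = θ := by push_cast [hθdef]; ring_nf
  have hθpos : 0 < θ := by
    rw [hθdef]; positivity
  have hθlt : θ < Real.pi := by
    have hm' : (2:ℝ) ≤ (m:ℝ) := by exact_mod_cast hm
    rw [hθdef, div_lt_iff₀ (by positivity)]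
    nlinarith
  set A : ℝ := (1/2) * Real.sin θ with hAdef
  have hA : 0 < A := by
    have := Real.sin_pos_of_pos_of_lt_pi hθpos hθlt
    rw [hAdef]; linarith
  set B : ℝ := Real.pi / (4 * m) - A with hBdef
  have hB : 0 < B := by
    have hs := Real.sin_lt hθpos
    rw [hBdef, hAdef, hθdef]
    rw [hθdef] at hs
    have h2 : 2 * Real.pi / (4*(m:ℝ)) = 2 * (Real.pi/(4*(m:ℝ))) := by ring
    rw [h2] at hs
    rw [h2]
    linarith
  -- bounds on iVal and jVal
  have hi : (iVal (4 * m) x : ℝ) ≤ 2 * m := by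
    have h1 : iVal (4 * m) x ≤ 2 * m := by
      unfold iVal
      have h4 : 4 * m / 4 = m := by omega
      rw [h4]
      have := min_le_right x.2.1 m
      have := min_le_right x.2.2 m
      omega
    exact_mod_cast h1
  have hj : (jVal (4 * m) x : ℝ) ≤ 3 * m - 1 := by
    have h2 : ((4 * m : ℕ) : ℤ) / 2 = 2 * m := by push_cast; omega
    have h4 : ((4 * m : ℕ) : ℤ) / 4 = m := by push_cast; omega
    have h1 : jVal (4 * m) x ≤ 3 * (m:ℤ) - 1 := by
      unfold jVal
      rw [h2, h4]
      have hmin1 : min (x.1 : ℤ) (2 * (m:ℤ)) ≤ (x.1 : ℤ) := min_le_left _ _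
      have hmin2 : min (x.2.1 : ℤ) (m:ℤ) ≤ (m:ℤ) := min_le_right _ _
      have hmax : (0:ℤ) ≤ max 0 (min ((x.2.1 : ℤ) - m) ((m:ℤ) - x.2.2)) := le_max_left _ _
      have hx' : (x.1 : ℤ) ≤ 2 * m - 1 := by
        have : (x.1 : ℤ) < 2 * m := by exact_mod_cast hx
        omega
      omega
    calc (jVal (4*m) x : ℝ) ≤ ((3 * (m:ℤ) - 1 : ℤ) : ℝ) := by exact_mod_cast h1
      _ = 3 * m - 1 := by push_cast; ring
  have hAB : A + B = Real.pi / (4 * m) := by rw [hBdef]; ring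
  unfold fitness
  rw [hθeq]
  rw [show ((1:ℝ)/2) * Real.sin θ = A from hAdef.symm]
  have hn : ((4 * m : ℕ) : ℝ) = 4 * m := by push_cast; ring
  rw [hn]
  rw [show Real.pi / (4 * (m:ℝ)) - A = B from hBdef.symm]
  clear_value θ A B
  have key : (4 * (m:ℝ) / 2 + iVal (4*m) x) * A + (4 * m / 4 + jVal (4*m) x) * B
      < Real.pi := by
    have hABpi : (4 * (m:ℝ)) * A + (4 * m) * B = Real.pi := by
      rw [← mul_add, hAB]; field_simp
    have e1 : (4 * (m:ℝ) / 2 + iVal (4*m) x) * A ≤ (4 * m) * A :=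
      mul_le_mul_of_nonneg_right (by linarith) hA.le
    have e2 : (4 * (m:ℝ) / 4 + jVal (4*m) x) * B < (4 * m) * B :=
      mul_lt_mul_of_pos_right (by linarith) hB
    linarith
  have h1π : 0 < 1 / Real.pi := by positivity
  calc (1 / Real.pi) * ((4 * (m:ℝ) / 2 + iVal (4*m) x) * A + (4 * m / 4 + jVal (4*m) x) * B)
      < (1 / Real.pi) * Real.pi := mul_lt_mul_of_pos_left key h1π
    _ = 1 := by field_simp

lemma fitness_eq_one_fst {m : ℕ} (hm : 2 ≤ m) {x : State}
    (h : fitness (4 * m) x = 1) : 2 * m ≤ x.1 := by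
  by_contra hc
  exact absurd h (ne_of_lt (fitness_lt_one hm (by omega)))

lemma applyAction_fst_le (k : Fin 18) (x : State) : (applyAction k x).1 ≤ x.1 + 1 := by
  obtain ⟨a, b, c⟩ := x
  fin_cases k <;> simp [applyAction] <;> first
    | (split_ifs <;> dsimp <;> omega)
    | omega

lemma stepOneBit_support {n : ℕ} {y x : State} (h : stepOneBit n y x ≠ 0) :
    x.1 ≤ y.1 + 1 := by
  rw [stepOneBit, ← PMF.mem_support_iff, PMF.support_map] at h
  obtain ⟨z, hz, rfl⟩ := h
  rw [mutate, PMF.support_map] at hz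
  obtain ⟨k, _, rfl⟩ := hz
  unfold select
  split_ifs
  · exact applyAction_fst_le k y
  · omega

lemma initDist_support {s : ℕ} {x : State} (h : initDist s x ≠ 0) : x.1 ≤ s := by
  rw [initDist, ← PMF.mem_support_iff, PMF.support_map] at h
  obtain ⟨q, _, rfl⟩ := h
  exact Nat.lt_succ_iff.mp q.1.isLt

lemma alive_props (m : ℕ) (hm : 2 ≤ m) :
    ∀ t : ℕ,
      (∀ x : State, alive (4*m) (stepOneBit (4*m)) (initDist m) t x ≠ 0 → x.1 ≤ m + t) ∧
      (m + t < 2*m →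
        ∑' x : State, alive (4*m) (stepOneBit (4*m)) (initDist m) t x = 1) := by
  intro t
  induction t with
  | zero =>
    constructor
    · intro x hx
      simp only [alive] at hx
      split_ifs at hx with h
      · exact absurd rfl hx
      · simpa using initDist_support hx
    · intro _
      have he : ∀ x : State,
          alive (4*m) (stepOneBit (4*m)) (initDist m) 0 x = initDist m x := by
        intro x
        simp only [alive]
        split_ifs with h
        · symm
          by_contra hne
          have hle := initDist_support hne
          have := fitness_eq_one_fst hm h
          omega
        · rfl
      rw [tsum_congr he, (initDist m).tsum_coe]
  | succ t IH =>
    constructor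
    · intro x hx
      simp only [alive] at hx
      split_ifs at hx with h
      case pos => exact absurd rfl hx
      have hne : ¬ ∀ y : State,
          alive (4*m) (stepOneBit (4*m)) (initDist m) t y * stepOneBit (4*m) y x = 0 := by
        rw [← ENNReal.tsum_eq_zero]; exact hx
      push_neg at hne
      obtain ⟨y, hy⟩ := hne
      rw [mul_ne_zero_iff] at hy
      have h1 := IH.1 y hy.1
      have h2 := stepOneBit_support hy.2
      omega
    · intro hlt
      have hIH := IH.2 (by omega)
      have he : ∀ x : State,
          alive (4*m) (stepOneBit (4*m)) (initDist m) (t+1) x =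
            ∑' y : State,
              alive (4*m) (stepOneBit (4*m)) (initDist m) t y * stepOneBit (4*m) y x := by
        intro x
        simp only [alive]
        split_ifs with h
        · symm
          rw [ENNReal.tsum_eq_zero]
          intro y
          rcases eq_or_ne (alive (4*m) (stepOneBit (4*m)) (initDist m) t y) 0 with h0 | h0
          · rw [h0, zero_mul]
          · have h1 := IH.1 y h0
            have h2 := fitness_eq_one_fst hm h
            have h3 : stepOneBit (4*m) y x = 0 := by
              by_contra hc
              have := stepOneBit_support hc
              omega
            rw [h3, mul_zero]
        · rfl
      rw [tsum_congr he, ENNReal.tsum_comm]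
      calc ∑' y : State, ∑' x : State,
            alive (4*m) (stepOneBit (4*m)) (initDist m) t y * stepOneBit (4*m) y x
          = ∑' y : State,
            alive (4*m) (stepOneBit (4*m)) (initDist m) t y * ∑' x, stepOneBit (4*m) y x :=
            tsum_congr fun y => ENNReal.tsum_mul_left
        _ = ∑' y : State, alive (4*m) (stepOneBit (4*m)) (initDist m) t y := by
            refine tsum_congr fun y => ?_
            rw [(stepOneBit (4*m) y).tsum_coe, mul_one]
        _ = 1 := hIH

/-- there exist constants `C > 0` and `n₀` such that for every
integer `n ≥ n₀` divisible by `4`, the (1+1)-ENAS algorithm with one-bit mutation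
and initial bound `s = n/4` has expected runtime at least `C·log n` on the UNIFORM
problem. -/
theorem onebit_lower_bound :
    ∃ C : ℝ, 0 < C ∧ ∃ n₀ : ℕ, ∀ n : ℕ, n₀ ≤ n → 4 ∣ n →
      ENNReal.ofReal (C * Real.log n) ≤
        expectedRuntime n (stepOneBit n) (initDist (n / 4)) := by
  refine ⟨1, one_pos, 64, fun n hn h4 => ?_⟩
  obtain ⟨m, rfl⟩ := h4
  have hm : 16 ≤ m := by omega
  have hm2 : 2 ≤ m := by omega
  have hdiv : 4 * m / 4 = m := by omega
  rw [hdiv]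
  have hER : (m : ℝ≥0∞) ≤ expectedRuntime (4*m) (stepOneBit (4*m)) (initDist m) := by
    have hsum : ∑ t ∈ Finset.range m,
        (∑' x : State, alive (4*m) (stepOneBit (4*m)) (initDist m) t x) ≤
        expectedRuntime (4*m) (stepOneBit (4*m)) (initDist m) :=
      ENNReal.sum_le_tsum _
    refine le_trans ?_ hsum
    rw [Finset.sum_congr rfl (fun t ht => (alive_props m hm2 t).2
      (by have := Finset.mem_range.mp ht; omega))]
    simp
  refine le_trans ?_ hER
  rw [one_mul]
  have hlog : Real.log ((4*m : ℕ) : ℝ) ≤ (m : ℝ) := by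
    set y : ℝ := ((4*m : ℕ) : ℝ) with hy
    have hy4 : y = 4 * (m:ℝ) := by rw [hy]; push_cast; ring
    have hy64 : (64:ℝ) ≤ y := by
      rw [hy4]
      have : (16:ℝ) ≤ (m:ℝ) := by exact_mod_cast hm
      linarith
    have hy0 : (0:ℝ) < y := by linarith
    have hsq : Real.sqrt y * Real.sqrt y = y := Real.mul_self_sqrt hy0.le
    have h8 : (8:ℝ) ≤ Real.sqrt y := by
      have h1 : Real.sqrt 64 ≤ Real.sqrt y := Real.sqrt_le_sqrt hy64
      have h2 : Real.sqrt 64 = 8 := by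
        rw [show (64:ℝ) = 8^2 by norm_num, Real.sqrt_sq (by norm_num : (0:ℝ) ≤ 8)]
      linarith
    have hlog1 : Real.log (Real.sqrt y) = Real.log y / 2 := Real.log_sqrt hy0.le
    have hlog2 : Real.log (Real.sqrt y) ≤ Real.sqrt y - 1 :=
      Real.log_le_sub_one_of_pos (by positivity)
    have hmy : (m:ℝ) = y / 4 := by rw [hy4]; ring
    rw [hmy]
    nlinarith [sq_nonneg (Real.sqrt y - 8)]
  calc ENNReal.ofReal (Real.log ((4*m : ℕ) : ℝ)) ≤ ENNReal.ofReal ((m:ℝ)) :=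
        ENNReal.ofReal_le_ofReal hlog
    _ = (m : ℝ≥0∞) := ENNReal.ofReal_natCast m

end ENAS
end

section
/- For every real number x ≥ 6, it holds that (3x/4)·(π/x − (1/2)·sin(2π/x)) < (1/2)·sin(2π/x). -/
open Real

private lemma taylor_aux (f g : ℝ → ℝ) (hf0 : f 0 = 0)
    (hd : ∀ t, HasDerivAt f (g t) t) (hg : ∀ t, 0 ≤ t → 0 ≤ g t) :
    ∀ t, 0 ≤ t → 0 ≤ f t := by
  intro t ht
  have hmono : MonotoneOn f (Set.Ici (0:ℝ)) := by
    apply monotoneOn_of_deriv_nonneg (convex_Ici 0)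
    · exact Continuous.continuousOn
        (continuous_iff_continuousAt.2 fun x => (hd x).continuousAt)
    · intro x _
      exact (hd x).differentiableAt.differentiableWithinAt
    · intro x hx
      rw [interior_Ici] at hx
      rw [(hd x).deriv]
      exact hg x hx.le
  calc (0:ℝ) = f 0 := hf0.symm
    _ ≤ f t := hmono Set.self_mem_Ici ht ht

private lemma sin_ge_cubic : ∀ t : ℝ, 0 ≤ t → t - t ^ 3 / 6 ≤ Real.sin t := by
  have := taylor_aux (fun t => Real.sin t - (t - t ^ 3 / 6))
    (fun t => Real.cos t - (1 - 3 * t ^ 2 / 6)) (by norm_num)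
    (fun t => by
      have h1 := Real.hasDerivAt_sin t
      have h2 : HasDerivAt (fun t : ℝ => t - t ^ 3 / 6) (1 - 3 * t ^ 2 / 6) t := by
        have := (hasDerivAt_pow 3 t).div_const 6
        norm_num at this
        exact (hasDerivAt_id t).sub this
      exact h1.sub h2)
    (fun t _ => by nlinarith [Real.one_sub_sq_div_two_le_cos (x := t)])
  intro t ht
  have := this t ht
  linarith

private lemma cos_le_quartic : ∀ t : ℝ, 0 ≤ t →
    Real.cos t ≤ 1 - t ^ 2 / 2 + t ^ 4 / 24 := by
  have := taylor_aux (fun t => (1 - t ^ 2 / 2 + t ^ 4 / 24) - Real.cos t)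
    (fun t => (-(2 * t / 2) + 4 * t ^ 3 / 24) - (-Real.sin t)) (by norm_num)
    (fun t => by
      have h1 : HasDerivAt (fun t : ℝ => 1 - t ^ 2 / 2 + t ^ 4 / 24)
          (-(2 * t / 2) + 4 * t ^ 3 / 24) t := by
        have p2 := (hasDerivAt_pow 2 t).div_const 2
        have p4 := (hasDerivAt_pow 4 t).div_const 24
        norm_num at p2 p4
        have := ((hasDerivAt_const t (1:ℝ)).sub p2).add p4
        refine this.congr_deriv ?_
        try ring
      exact h1.sub (Real.hasDerivAt_cos t))
    (fun t ht => by nlinarith [sin_ge_cubic t ht])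
  intro t ht
  have := this t ht
  linarith

private lemma cos_ge_sextic : ∀ t : ℝ, 0 ≤ t →
    1 - t ^ 2 / 2 + t ^ 4 / 24 - t ^ 6 / 720 ≤ Real.cos t := by
  have hsin_le : ∀ t : ℝ, 0 ≤ t → Real.sin t ≤ t - t ^ 3 / 6 + t ^ 5 / 120 := by
    have := taylor_aux (fun t => (t - t ^ 3 / 6 + t ^ 5 / 120) - Real.sin t)
      (fun t => (1 - 3 * t ^ 2 / 6 + 5 * t ^ 4 / 120) - Real.cos t) (by norm_num)
      (fun t => by
        have h1 : HasDerivAt (fun t : ℝ => t - t ^ 3 / 6 + t ^ 5 / 120)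
            (1 - 3 * t ^ 2 / 6 + 5 * t ^ 4 / 120) t := by
          have p3 := (hasDerivAt_pow 3 t).div_const 6
          have p5 := (hasDerivAt_pow 5 t).div_const 120
          norm_num at p3 p5
          have := ((hasDerivAt_id t).sub p3).add p5
          refine this.congr_deriv ?_
          try ring
        exact h1.sub (Real.hasDerivAt_sin t))
      (fun t ht => by nlinarith [cos_le_quartic t ht])
    intro t ht
    have := this t ht
    linarith
  have := taylor_aux
    (fun t => Real.cos t - (1 - t ^ 2 / 2 + t ^ 4 / 24 - t ^ 6 / 720))
    (fun t => -Real.sin t - (-(2 * t / 2) + 4 * t ^ 3 / 24 - 6 * t ^ 5 / 720))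
    (by norm_num)
    (fun t => by
      have h1 : HasDerivAt (fun t : ℝ => 1 - t ^ 2 / 2 + t ^ 4 / 24 - t ^ 6 / 720)
          (-(2 * t / 2) + 4 * t ^ 3 / 24 - 6 * t ^ 5 / 720) t := by
        have p2 := (hasDerivAt_pow 2 t).div_const 2
        have p4 := (hasDerivAt_pow 4 t).div_const 24
        have p6 := (hasDerivAt_pow 6 t).div_const 720
        norm_num at p2 p4 p6
        have := (((hasDerivAt_const t (1:ℝ)).sub p2).add p4).sub p6
        refine this.congr_deriv ?_
        try ring
      exact (Real.hasDerivAt_cos t).sub h1)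
    (fun t ht => by nlinarith [hsin_le t ht])
  intro t ht
  have := this t ht
  linarith

private lemma sin_ge_septic : ∀ t : ℝ, 0 ≤ t →
    t - t ^ 3 / 6 + t ^ 5 / 120 - t ^ 7 / 5040 ≤ Real.sin t := by
  have := taylor_aux
    (fun t => Real.sin t - (t - t ^ 3 / 6 + t ^ 5 / 120 - t ^ 7 / 5040))
    (fun t => Real.cos t - (1 - 3 * t ^ 2 / 6 + 5 * t ^ 4 / 120 - 7 * t ^ 6 / 5040))
    (by norm_num)
    (fun t => by
      have h1 : HasDerivAt
          (fun t : ℝ => t - t ^ 3 / 6 + t ^ 5 / 120 - t ^ 7 / 5040)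
          (1 - 3 * t ^ 2 / 6 + 5 * t ^ 4 / 120 - 7 * t ^ 6 / 5040) t := by
        have p3 := (hasDerivAt_pow 3 t).div_const 6
        have p5 := (hasDerivAt_pow 5 t).div_const 120
        have p7 := (hasDerivAt_pow 7 t).div_const 5040
        norm_num at p3 p5 p7
        have := (((hasDerivAt_id t).sub p3).add p5).sub p7
        refine this.congr_deriv ?_
        try ring
      exact (Real.hasDerivAt_sin t).sub h1)
    (fun t ht => by nlinarith [cos_ge_sextic t ht])
  intro t ht
  have := this t ht
  linarith

/-- for every real `x ≥ 6`,
`(3x/4)·(π/x − (1/2)·sin(2π/x)) < (1/2)·sin(2π/x)`; i.e., the total fitness gain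
from correctly classifying all `3n/4` segment regions of the UNIFORM problem is
strictly smaller than the gain from a single triangular region. -/
theorem segment_gain_lt_triangle_gain (x : ℝ) (hx : 6 ≤ x) :
    3 * x / 4 * (π / x - 1 / 2 * Real.sin (2 * π / x)) <
      1 / 2 * Real.sin (2 * π / x) := by
  have hx0 : (0:ℝ) < x := by linarith
  set t : ℝ := 2 * π / x with ht_def
  have hπ : (0:ℝ) < π := Real.pi_pos
  have ht0 : 0 < t := by positivity
  have hπlt : π < 3.15 := by
    have := Real.pi_lt_d2
    linarith
  have ht1 : t ≤ 1.05 := by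
    rw [ht_def, div_le_iff₀ hx0]
    nlinarith
  have hxt : x * t = 2 * π := by
    rw [ht_def]
    field_simp
  set s : ℝ := Real.sin t with hs_def
  have hsle : s ≤ t := by
    rw [hs_def]
    exact Real.sin_le ht0.le
  have hslow : t - t ^ 3 / 6 ≤ s := sin_ge_cubic t ht0.le
  have hshigh : t - t ^ 3 / 6 + t ^ 5 / 120 - t ^ 7 / 5040 ≤ s :=
    sin_ge_septic t ht0.le
  -- core inequality: (3π/4)(t - s) < (t/2) s
  have key : 3 * π / 4 * (t - s) < t / 2 * s := by
    have h1 : t - s ≤ t ^ 3 / 6 - t ^ 5 / 120 + t ^ 7 / 5040 := by linarith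
    have h2 : t - t ^ 3 / 6 ≤ s := hslow
    nlinarith [sq_nonneg t, sq_nonneg (t - 1), mul_pos ht0 ht0,
      pow_pos ht0 3, pow_pos ht0 5, pow_pos ht0 7,
      mul_nonneg (pow_pos ht0 3).le (sub_nonneg.2 ht1),
      mul_nonneg (pow_pos ht0 5).le (sub_nonneg.2 ht1),
      mul_nonneg (mul_nonneg (pow_pos ht0 5).le (sub_nonneg.2 ht1)) (sub_nonneg.2 ht1)]
  -- transfer back to x
  have hπx : π / x = t / 2 := by
    rw [ht_def]
    ring
  have hmul : 3 * x / 4 * (π / x - 1 / 2 * s) * t < 1 / 2 * s * t := by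
    rw [hπx]
    have e : 3 * x / 4 * (t / 2 - 1 / 2 * s) * t = 3 * π / 4 * (t - s) := by
      linear_combination (3 / 8 * (t - s)) * hxt
    rw [e]
    calc 3 * π / 4 * (t - s) < t / 2 * s := key
      _ = 1 / 2 * s * t := by ring
  exact lt_of_mul_lt_mul_right hmul ht0.le
end

section
/- For all integers i, i' with 0 ≤ i, i' ≤ n/2 and all integers j, j' with 0 ≤ j, j' ≤ 3n/4, it holds that F(i, j) < F(i', j') if and only if i < i', or i = i' and j < j'. In particular, F is strictly increasing in the lexicographic order on (i, j), so the solution subspaces ordered by (i, j) are strictly ordered by fitness. -/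
set_option maxHeartbeats 1000000


open Real

/-- with `A = (1/2)·sin(2π/n)`, `B = π/n − A` and
`F(i, j) = (n/2 + i)·A + (n/4 + j)·B`, for all integers `0 ≤ i, i' ≤ n/2` and
`0 ≤ j, j' ≤ 3n/4` we have `F(i, j) < F(i', j')` iff `(i, j) <_lex (i', j')`:
the solution subspaces ordered by `(i, j)` are strictly ordered by fitness. -/
theorem fitness_lex_order (n : ℕ) (hn : 8 ≤ n) (hn4 : 4 ∣ n)
    (A B : ℝ) (hA : A = 1 / 2 * Real.sin (2 * π / n)) (hB : B = π / n - A)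
    (F : ℤ → ℤ → ℝ) (hF : ∀ i j : ℤ, F i j = ((n : ℝ) / 2 + i) * A + ((n : ℝ) / 4 + j) * B)
    (i i' j j' : ℤ) (hi0 : 0 ≤ i) (hi : i ≤ (n : ℤ) / 2) (hi'0 : 0 ≤ i')
    (hi' : i' ≤ (n : ℤ) / 2) (hj0 : 0 ≤ j) (hj : j ≤ 3 * (n : ℤ) / 4)
    (hj'0 : 0 ≤ j') (hj' : j' ≤ 3 * (n : ℤ) / 4) :
    F i j < F i' j' ↔ i < i' ∨ (i = i' ∧ j < j') := by
  obtain ⟨m, rfl⟩ := hn4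
  have hm2 : 2 ≤ m := by omega
  have hπ := Real.pi_pos
  have hπlt : π < 3.15 := Real.pi_lt_d2
  have hπgt : 3.14 < π := Real.pi_gt_d2
  have hmR : (2:ℝ) ≤ m := by exact_mod_cast hm2
  have hnR : ((4*m : ℕ) : ℝ) = 4 * (m:ℝ) := by push_cast; ring
  have hn0 : (0:ℝ) < 4 * (m:ℝ) := by linarith
  set x : ℝ := 2 * π / (4*m : ℕ) with hxdef
  have hx : x = π / (2 * m) := by rw [hxdef, hnR]; field_simp; ring
  have hx0 : 0 < x := by rw [hx]; positivity
  have hxle : x ≤ π / 4 := by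
    rw [hx]
    apply div_le_div_of_nonneg_left (le_of_lt hπ) (by norm_num) (by linarith)
  have hA2 : A = Real.sin x / 2 := by rw [hA, hxdef]; ring
  have hB2 : B = (x - Real.sin x) / 2 := by
    rw [hB, hA2, hx, hnR]; field_simp; ring
  have hslt := Real.sin_lt hx0
  have hBpos : 0 < B := by rw [hB2]; linarith
  have hApos : 0 < A := by
    rw [hA2]
    have : 0 < Real.sin x := Real.sin_pos_of_pos_of_lt_pi hx0 (by nlinarith)
    linarith
  -- key inequality: 3m * B < A
  have key : 3 * (m:ℝ) * B < A := by
    rcases eq_or_lt_of_le hm2 with hm | hm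
    · -- m = 2, n = 8, x = π/4
      have hm' : (m:ℝ) = 2 := by exact_mod_cast hm.symm
      have hx4 : x = π / 4 := by rw [hx, hm']; ring
      have hs : Real.sin x = Real.sqrt 2 / 2 := by rw [hx4, Real.sin_pi_div_four]
      have hsq : (1.4:ℝ) < Real.sqrt 2 := by
        rw [show (1.4:ℝ) = Real.sqrt 1.96 by
          rw [show (1.96:ℝ) = 1.4^2 by norm_num, Real.sqrt_sq (by norm_num)]]
        exact Real.sqrt_lt_sqrt (by norm_num) (by norm_num)
      rw [hA2, hB2, hs, hm', hx4]
      nlinarith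
    · -- m ≥ 3
      have hm3 : (3:ℝ) ≤ m := by exact_mod_cast hm
      have hx1 : x ≤ 1 := by
        rw [hx]
        rw [div_le_one (by linarith)]
        nlinarith
      have hcube : x - x ^ 3 / 4 < Real.sin x := by
        have := Real.sin_gt_sub_cube hx0; linarith [pow_pos hx0 3]
      have hxm : x * (2 * m) = π := by
        rw [hx]; field_simp
      rw [hA2, hB2]
      -- need 3m(x - sin x) < sin x, using sin x > x - x^3/4 and x*(2m)=π, x ≤ π/6
      have hxle6 : x ≤ π / 6 := by
        rw [hx]
        apply div_le_div_of_nonneg_left (le_of_lt hπ) (by norm_num) (by linarith)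
      have hx525 : x ≤ 0.525 := by linarith
      have hc1 : x - Real.sin x < x ^ 3 / 4 := by linarith
      have hmx : (m:ℝ) * x = π / 2 := by nlinarith [hxm]
      have hkey2 : 3 * (m:ℝ) * (x ^ 3 / 4) + x ^ 3 / 4 ≤ x := by
        have e1 : 3 * (m:ℝ) * (x ^ 3 / 4) = 3 * π * x ^ 2 / 8 := by
          nlinarith [hmx, sq_nonneg x]
        rw [e1]
        nlinarith [sq_nonneg x, mul_pos hx0 hx0]
      have h3m : (0:ℝ) < 3 * m := by linarith
      have h5 : 3 * (m:ℝ) * (x - Real.sin x) < 3 * (m:ℝ) * (x ^ 3 / 4) :=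
        mul_lt_mul_of_pos_left hc1 h3m
      linarith
  -- bounds as real numbers
  have hj3 : j ≤ 3 * m := by
    have : (3 : ℤ) * ((4:ℤ) * m) / 4 = 3 * m := by omega
    have h' : j ≤ 3 * (((4*m : ℕ)) : ℤ) / 4 := hj
    push_cast at h'
    omega
  have hj'3 : j' ≤ 3 * m := by
    have h' : j' ≤ 3 * (((4*m : ℕ)) : ℤ) / 4 := hj'
    push_cast at h'
    omega
  have hjR : (j:ℝ) ≤ 3 * m := by exact_mod_cast hj3
  have hj'R : (j':ℝ) ≤ 3 * m := by exact_mod_cast hj'3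
  have hj0R : (0:ℝ) ≤ j := by exact_mod_cast hj0
  have hj'0R : (0:ℝ) ≤ j' := by exact_mod_cast hj'0
  have hFd : F i' j' - F i j = ((i':ℝ) - i) * A + ((j':ℝ) - j) * B := by
    rw [hF, hF]; ring
  constructor
  · intro h
    by_contra hc
    push_neg at hc
    obtain ⟨h1, h2⟩ := hc
    rcases eq_or_lt_of_le h1 with heq | hlt
    · -- i' = i
      have hji : j' ≤ j := h2 heq.symm
      have hiR : (i':ℝ) = i := by exact_mod_cast heq
      have hjiR : (j':ℝ) ≤ j := by exact_mod_cast hji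
      nlinarith [hFd]
    · -- i' < i
      have hiR : (i':ℝ) + 1 ≤ i := by exact_mod_cast hlt
      nlinarith [hFd]
  · intro h
    rcases h with hlt | ⟨heq, hjlt⟩
    · have hiR : (i:ℝ) + 1 ≤ i' := by exact_mod_cast hlt
      nlinarith [hFd]
    · have hiR : (i:ℝ) = i' := by exact_mod_cast heq
      have hjR' : (j:ℝ) + 1 ≤ j' := by exact_mod_cast hjlt
      nlinarith [hFd]
end

section
/- For every architecture x = (n_A, n_B, n_C) ∈ ℕ³, the fitness satisfies f(x) ≤ 1; moreover f(x) = 1 if and only if n_A ≥ n/2, n_B ≥ n/4, and n_C ≥ n/4. -/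
namespace ENAS

set_option maxHeartbeats 1000000 in
/-- for every architecture `x = (n_A, n_B, n_C) ∈ ℕ³` the fitness
satisfies `f(x) ≤ 1`, and `f(x) = 1` iff `n_A ≥ n/2`, `n_B ≥ n/4` and `n_C ≥ n/4`. -/
theorem fitness_le_one_and_eq_one_iff (n : ℕ) (hn : 8 ≤ n) (hn4 : 4 ∣ n) (x : State) :
    fitness n x ≤ 1 ∧
      (fitness n x = 1 ↔ n / 2 ≤ x.1 ∧ n / 4 ≤ x.2.1 ∧ n / 4 ≤ x.2.2) := by
  obtain ⟨m, rfl⟩ := hn4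
  obtain ⟨nA, nB, nC⟩ := x
  have hm : 2 ≤ m := by omega
  set I : ℕ := iVal (4 * m) (nA, nB, nC) with hI
  set J : ℤ := jVal (4 * m) (nA, nB, nC) with hJ
  have hIdef : I = min nB m + min nC m := by
    simp only [hI, iVal]
    congr 1 <;> congr 1 <;> omega
  have hJdef : J = min (nA : ℤ) (2 * m) + min (nB : ℤ) m -
      max 0 (min ((nB : ℤ) - m) ((m : ℤ) - nC)) := by
    simp only [hJ, jVal]
    push_cast
    omega
  have hIle : (I : ℤ) ≤ 2 * m := by omega
  have hJle : J ≤ 3 * m := by omega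
  have hiff : ((I : ℤ) = 2 * m ∧ J = 3 * m) ↔
      (4 * m / 2 ≤ nA ∧ 4 * m / 4 ≤ nB ∧ 4 * m / 4 ≤ nC) := by
    constructor
    · intro h; omega
    · intro h; omega
  have hmR : (2 : ℝ) ≤ (m : ℝ) := by exact_mod_cast hm
  have hπ := Real.pi_pos
  set s : ℝ := Real.sin (2 * Real.pi / (4 * m)) with hs
  have ht0 : 0 < 2 * Real.pi / (4 * (m : ℝ)) := by positivity
  have hs0 : 0 < s := by
    rw [hs]
    push_cast
    apply Real.sin_pos_of_pos_of_lt_pi ht0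
    rw [div_lt_iff₀ (by positivity)]
    nlinarith
  have hslt : s < 2 * Real.pi / (4 * m) := by
    rw [hs]; push_cast; exact Real.sin_lt ht0
  have hB0 : 0 < Real.pi / (4 * (m : ℝ)) - s / 2 := by
    have : 2 * Real.pi / (4 * (m : ℝ)) = 2 * (Real.pi / (4 * m)) := by ring
    rw [this] at hslt
    linarith
  have hmne : (m : ℝ) ≠ 0 := by positivity
  have key : fitness (4 * m) (nA, nB, nC) =
      1 - (1 / Real.pi) * (((2 * m : ℝ) - I) * (s / 2) +
        ((3 * m : ℝ) - J) * (Real.pi / (4 * m) - s / 2)) := by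
    simp only [fitness, ← hI, ← hJ, hs]
    push_cast
    field_simp
    ring
  set S : ℝ := ((2 * m : ℝ) - I) * (s / 2) +
      ((3 * m : ℝ) - J) * (Real.pi / (4 * m) - s / 2) with hS
  have c1 : (0 : ℝ) ≤ (2 * m : ℝ) - I := by
    have : (I : ℝ) ≤ 2 * m := by exact_mod_cast hIle
    linarith
  have c2 : (0 : ℝ) ≤ (3 * m : ℝ) - J := by
    have : (J : ℝ) ≤ 3 * m := by exact_mod_cast hJle
    linarith
  have t1 : (0 : ℝ) ≤ ((2 * m : ℝ) - I) * (s / 2) := by positivity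
  have t2 : (0 : ℝ) ≤ ((3 * m : ℝ) - J) * (Real.pi / (4 * m) - s / 2) :=
    mul_nonneg c2 (le_of_lt hB0)
  have hS0 : 0 ≤ S := by rw [hS]; linarith
  constructor
  · rw [key]
    have : 0 ≤ (1 / Real.pi) * S := by positivity
    linarith
  · rw [key]
    rw [← hiff]
    constructor
    · intro h
      have hSz : S = 0 := by
        have h1 : (1 / Real.pi) * S = 0 := by linarith
        have : (1 / Real.pi) ≠ 0 := by positivity
        exact (mul_eq_zero.mp h1).resolve_left this
      have e1 : ((2 * m : ℝ) - I) * (s / 2) = 0 := by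
        rw [hS] at hSz; linarith
      have e2 : ((3 * m : ℝ) - J) * (Real.pi / (4 * m) - s / 2) = 0 := by
        rw [hS] at hSz; linarith
      have f1 : ((2 * m : ℝ) - I) = 0 := by
        rcases mul_eq_zero.mp e1 with h' | h'
        · exact h'
        · linarith
      have f2 : ((3 * m : ℝ) - J) = 0 := by
        rcases mul_eq_zero.mp e2 with h' | h'
        · exact h'
        · linarith
      constructor
      · have : (I : ℝ) = 2 * m := by linarith
        exact_mod_cast this
      · have : (J : ℝ) = 3 * m := by linarith
        exact_mod_cast this
    · rintro ⟨h1, h2⟩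
      have g1 : (I : ℝ) = 2 * m := by exact_mod_cast h1
      have g2 : (J : ℝ) = 3 * m := by exact_mod_cast h2
      have : S = 0 := by rw [hS, g1, g2]; ring
      rw [this]; ring

end ENAS
end
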